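/- Let m be a positive integer, let m' > 0 and α > 0 be real numbers, and let O_{N,N}(α) = ∫₀^∞ f_G(x, m') (∫₀^{αx} f_G(y, m) dy) dx be the probability that a unit-mean Gamma variable with shape m is less than α times an independent unit-mean Gamma variable with shape m'. Then O_{N,N}(α) = 1 − (m'^{m'} / Γ(m')) · Σ_{k=0}^{m−1} (m α)^k Γ(k + m') / (k! · (m' + m α)^{k + m'}). -/

import Mathlib

open Real MeasureTheory

/-- Unit-mean Nakagami-m (Gamma) density with shape parameter `s`. -/
noncomputable def fG (s x : ℝ) : ℝ :=
  if 0 < x then s ^ s * x ^ (s - 1) * Real.exp (-s * x) / Real.Gamma s else 0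

lemma intOn (a r : ℝ) (ha : 0 < a) (hr : 0 < r) :
    IntegrableOn (fun x : ℝ => x ^ (a-1) * Real.exp (-(r*x))) (Set.Ioi 0) := by
  have := integrableOn_rpow_mul_exp_neg_mul_rpow (s := a-1) (p := 1) (b := r)
    (by linarith) zero_lt_one hr
  simpa [Real.rpow_one, neg_mul] using this

lemma intVal (a r : ℝ) (ha : 0 < a) (hr : 0 < r) :
    ∫ x in Set.Ioi (0:ℝ), x ^ (a-1) * Real.exp (-(r*x)) = Real.Gamma a / r ^ a := by
  rw [Real.integral_rpow_mul_exp_neg_mul_Ioi ha hr, one_div, Real.inv_rpow hr.le, div_eq_inv_mul]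

lemma sum_deriv (c : ℝ) (n : ℕ) (y : ℝ) :
    HasDerivAt (fun y : ℝ => ∑ k ∈ Finset.range (n+1), Real.exp (-c*y) * (c*y)^k / k.factorial)
      (-c * Real.exp (-c*y) * (c*y)^n / n.factorial) y := by
  have hexp : HasDerivAt (fun y : ℝ => Real.exp (-c*y)) (Real.exp (-c*y) * -c) y := by
    simpa using ((hasDerivAt_id y).const_mul (-c)).exp
  have hterm : ∀ k : ℕ, HasDerivAt (fun y : ℝ => Real.exp (-c*y) * (c*y)^k / k.factorial)
      ((Real.exp (-c*y) * -c * (c*y)^k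
        + Real.exp (-c*y) * ((k:ℝ) * (c*y)^(k-1) * c)) / k.factorial) y := by
    intro k
    have hp : HasDerivAt (fun y : ℝ => (c*y)^k) ((k:ℝ) * (c*y)^(k-1) * c) y := by
      simpa using ((hasDerivAt_id y).const_mul c).fun_pow k
    exact (hexp.mul hp).div_const _
  have hsum := HasDerivAt.fun_sum (u := Finset.range (n+1)) (fun k _ => hterm k)
  refine hsum.congr_deriv (Eq.symm ?_)
  rw [Finset.sum_range_succ']
  simp only [Nat.add_sub_cancel]
  have key : ∀ k : ℕ, (Real.exp (-c*y) * -c * (c*y)^(k+1)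
        + Real.exp (-c*y) * (((k+1:ℕ):ℝ) * (c*y)^k * c)) / (k+1).factorial
      = (-c * Real.exp (-c*y) * (c*y)^(k+1) / (k+1).factorial)
        - (-c * Real.exp (-c*y) * (c*y)^k / k.factorial) := by
    intro k
    have h1 : ((k+1).factorial : ℝ) = (k+1) * k.factorial := by
      push_cast [Nat.factorial_succ]; ring
    have h2 : (k.factorial : ℝ) ≠ 0 := Nat.cast_ne_zero.mpr k.factorial_ne_zero
    have h3 : ((k:ℝ)+1) ≠ 0 := by positivity
    rw [h1]
    field_simp
    push_cast
    ring
  rw [Finset.sum_congr rfl (fun k _ => key k), Finset.sum_range_sub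
    (f := fun k => -c * Real.exp (-c*y) * (c*y)^k / k.factorial)]
  simp
  ring

lemma inner_cdf (m : ℕ) (hm : 0 < m) (t : ℝ) (ht : 0 < t) :
    ∫ y in Set.Ioo (0:ℝ) t, fG (m : ℝ) y
      = 1 - Real.exp (-(m:ℝ)*t) * ∑ k ∈ Finset.range m, ((m:ℝ)*t)^k / k.factorial := by
  obtain ⟨n, rfl⟩ : ∃ n, m = n + 1 := ⟨m - 1, (Nat.succ_pred_eq_of_pos hm).symm⟩
  set c : ℝ := ((n+1 : ℕ) : ℝ) with hc
  have hcpos : 0 < c := by positivity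
  set g : ℝ → ℝ := fun y => c * Real.exp (-c*y) * (c*y)^n / n.factorial with hg
  have hfg : ∀ y ∈ Set.Ioo (0:ℝ) t, fG c y = g y := by
    intro y hy
    have hy0 : 0 < y := hy.1
    have h1 : c ^ c = c ^ (n+1 : ℕ) := by
      rw [hc]; rw [Real.rpow_natCast]
    have h2 : y ^ (c - 1) = y ^ (n : ℕ) := by
      have : c - 1 = ((n:ℕ):ℝ) := by push_cast [hc]; ring
      rw [this, Real.rpow_natCast]
    have h3 : Real.Gamma c = n.factorial := by
      rw [hc, Nat.cast_add, Nat.cast_one, Real.Gamma_nat_eq_factorial]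
    rw [fG, if_pos hy0, h1, h2, h3, hg]
    simp only [mul_pow]
    ring
  rw [setIntegral_congr_fun measurableSet_Ioo hfg]
  have hle : (0:ℝ) ≤ t := ht.le
  have hIoo : ∫ y in Set.Ioo (0:ℝ) t, g y = ∫ y in (0:ℝ)..t, g y := by
    rw [intervalIntegral.integral_of_le hle, integral_Ioc_eq_integral_Ioo]
  rw [hIoo]
  set F : ℝ → ℝ := fun y => -∑ k ∈ Finset.range (n+1), Real.exp (-c*y) * (c*y)^k / k.factorial
    with hF
  have hderiv : ∀ y ∈ Set.uIcc (0:ℝ) t, HasDerivAt F (g y) y := by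
    intro y _
    have := (sum_deriv c n y).fun_neg
    refine this.congr_deriv (Eq.symm ?_)
    rw [hg]; ring
  have hcont : IntervalIntegrable g volume 0 t := by
    apply Continuous.intervalIntegrable
    continuity
  rw [intervalIntegral.integral_eq_sub_of_hasDerivAt hderiv hcont]
  have hF0 : F 0 = -1 := by
    rw [hF]
    simp [Finset.sum_range_succ']
  rw [hF0]
  simp only [hF, Finset.mul_sum, mul_div_assoc]
  ring

/-- Lemma 3: outage probability when both the desired and the interfering links are
NLoS Nakagami with shape factors `m` (a positive integer) and `m' > 0`. -/
theorem outage_N_N (m : ℕ) (hm : 0 < m) (m' α : ℝ) (hm' : 0 < m') (hα : 0 < α) :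
    (∫ x in Set.Ioi (0 : ℝ), fG m' x * ∫ y in Set.Ioo 0 (α * x), fG (m : ℝ) y) =
      1 - (m' ^ m' / Real.Gamma m') *
        ∑ k ∈ Finset.range m,
          ((m : ℝ) * α) ^ k * Real.Gamma (k + m') /
            ((Nat.factorial k) * (m' + (m : ℝ) * α) ^ ((k : ℝ) + m')) := by
  set c : ℝ := (m : ℝ) with hc
  have hcpos : 0 < c := by positivity
  have hca : 0 < c * α := by positivity
  set b : ℝ := m' + c * α with hb
  have hbpos : 0 < b := by positivity
  have hΓ : 0 < Real.Gamma m' := Real.Gamma_pos_of_pos hm'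
  set K : ℝ := m' ^ m' / Real.Gamma m' with hK
  have hKpos : 0 < K := by
    apply div_pos (Real.rpow_pos_of_pos hm' _) hΓ
  set C : ℕ → ℝ := fun k => K * (c*α)^k / k.factorial with hC
  -- pointwise identity on Ioi 0
  have hpt : ∀ x ∈ Set.Ioi (0:ℝ),
      fG m' x * ∫ y in Set.Ioo (0:ℝ) (α * x), fG c y
      = K * (x ^ (m'-1) * Real.exp (-(m'*x)))
        - ∑ k ∈ Finset.range m, C k * (x ^ ((k:ℝ)+m'-1) * Real.exp (-(b*x))) := by
    intro x hx
    rw [Set.mem_Ioi] at hx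
    have hax : 0 < α * x := by positivity
    rw [inner_cdf m hm (α*x) hax]
    have hfG : fG m' x = K * (x ^ (m'-1) * Real.exp (-(m'*x))) := by
      rw [fG, if_pos hx, hK]
      rw [neg_mul]
      ring
    rw [hfG, mul_sub, mul_one]
    congr 1
    simp only [Finset.mul_sum]
    refine Finset.sum_congr rfl (fun k _ => ?_)
    have e1 : (c*(α*x))^k = (c*α)^k * x^(k:ℕ) := by rw [← mul_pow]; ring_nf
    have e2 : (x:ℝ)^(k:ℕ) = x ^ ((k:ℕ):ℝ) := (Real.rpow_natCast x k).symm
    have e3 : x ^ (m'-1) * x ^ ((k:ℕ):ℝ) = x ^ ((k:ℝ)+m'-1) := by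
      rw [← Real.rpow_add hx]; ring_nf
    have e4 : Real.exp (-(m'*x)) * Real.exp (-(c*α*x)) = Real.exp (-(b*x)) := by
      rw [← Real.exp_add, hb]; ring_nf
    rw [show -c*(α*x) = -(c*α*x) by ring, e1, e2, ← e3, ← e4, hC]
    ring
  rw [setIntegral_congr_fun measurableSet_Ioi hpt]
  -- integrability
  have hint1 : IntegrableOn (fun x : ℝ => K * (x ^ (m'-1) * Real.exp (-(m'*x)))) (Set.Ioi 0) :=
    (intOn m' m' hm' hm').const_mul K
  have hintk : ∀ k : ℕ, IntegrableOn
      (fun x : ℝ => C k * (x ^ ((k:ℝ)+m'-1) * Real.exp (-(b*x)))) (Set.Ioi 0) := by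
    intro k
    have := (intOn ((k:ℝ)+m') b (by positivity) hbpos).const_mul (C k)
    simpa [add_sub_assoc, IntegrableOn] using this
  have hint2 : IntegrableOn
      (fun x : ℝ => ∑ k ∈ Finset.range m, C k * (x ^ ((k:ℝ)+m'-1) * Real.exp (-(b*x))))
      (Set.Ioi 0) := integrable_finset_sum _ (fun k _ => hintk k)
  rw [integral_sub hint1 hint2, integral_finset_sum _ (fun k _ => hintk k)]
  -- values
  have v1 : ∫ x in Set.Ioi (0:ℝ), K * (x ^ (m'-1) * Real.exp (-(m'*x))) = 1 := by
    rw [integral_const_mul, intVal m' m' hm' hm', hK]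
    field_simp
  have v2 : ∀ k : ℕ, ∫ x in Set.Ioi (0:ℝ), C k * (x ^ ((k:ℝ)+m'-1) * Real.exp (-(b*x)))
      = C k * (Real.Gamma ((k:ℝ)+m') / b ^ ((k:ℝ)+m')) := by
    intro k
    rw [integral_const_mul]
    congr 1
    have := intVal ((k:ℝ)+m') b (by positivity) hbpos
    rw [show (k:ℝ)+m'-1 = (k:ℝ)+m'-1 from rfl]
    simpa [add_sub_assoc] using this
  rw [v1, Finset.sum_congr rfl (fun k _ => v2 k), Finset.mul_sum]
  congr 1
  refine Finset.sum_congr rfl (fun k _ => ?_)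
  rw [hC, hK]
  have hfk : (k.factorial : ℝ) ≠ 0 := Nat.cast_ne_zero.mpr k.factorial_ne_zero
  have hbk : b ^ ((k:ℝ)+m') ≠ 0 := (Real.rpow_pos_of_pos hbpos _).ne'
  rw [hc] at *
  field_simp
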